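/- Consider an N-player game with strategy sets K_i ⊆ ℝ^{n_i} and cost functions f_i, and assume 0 ∈ K and each K_i is symmetric (x ∈ K_i implies −x ∈ K_i). Then the game is a potential game if and only if h_P(z, y) = h_P(0, z+y) − h_P(0, z) for all z ∈ K and all y with z+y ∈ K; moreover, in that case the function φ(z) = C − h_P(z, −z) (for any constant C) is a potential function of the game. -/
import Mathlib


noncomputable section

/-- The set of joint strategy profiles of a game with strategy sets `K i ⊆ ℝ^{n i}`. -/
def jointK {N : ℕ} {n : Fin N → ℕ}
    (K : ∀ i, Set (EuclideanSpace ℝ (Fin (n i)))) :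
    Set (∀ i, EuclideanSpace ℝ (Fin (n i))) :=
  {x | ∀ i, x i ∈ K i}

/-- `φ` is an exact potential function for the game with strategy sets `K` and costs `f`. -/
def IsPotential {N : ℕ} {n : Fin N → ℕ}
    (K : ∀ i, Set (EuclideanSpace ℝ (Fin (n i))))
    (f : Fin N → (∀ i, EuclideanSpace ℝ (Fin (n i))) → ℝ)
    (φ : (∀ i, EuclideanSpace ℝ (Fin (n i))) → ℝ) : Prop :=
  ∀ i : Fin N, ∀ x ∈ jointK K, ∀ xi' ∈ K i,
    f i (Function.update x i xi') - f i x = φ (Function.update x i xi') - φ x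

/-- The game is a potential game. -/
def IsPotentialGame {N : ℕ} {n : Fin N → ℕ}
    (K : ∀ i, Set (EuclideanSpace ℝ (Fin (n i))))
    (f : Fin N → (∀ i, EuclideanSpace ℝ (Fin (n i))) → ℝ) : Prop :=
  ∃ φ, IsPotential K f φ

/-- The point on the path from `z` to `z + y` whose first `m` blocks are `z j + y j`
and whose remaining blocks are `z j`. -/
def upTo {N : ℕ} {n : Fin N → ℕ}
    (z y : ∀ i, EuclideanSpace ℝ (Fin (n i))) (m : ℕ) :
    ∀ i, EuclideanSpace ℝ (Fin (n i)) :=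
  fun j => if (j : ℕ) < m then z j + y j else z j

/-- `hP f z y` : the sum of the players' incremental cost differences along the path
`z → (z₁+y₁, z₋₁) → (z₁+y₁, z₂+y₂, …) → ⋯ → z+y`. -/
def hP {N : ℕ} {n : Fin N → ℕ}
    (f : Fin N → (∀ i, EuclideanSpace ℝ (Fin (n i))) → ℝ)
    (z y : ∀ i, EuclideanSpace ℝ (Fin (n i))) : ℝ :=
  ∑ i : Fin N, (f i (upTo z y ((i : ℕ) + 1)) - f i (upTo z y (i : ℕ)))

lemma upTo_succ' {N : ℕ} {n : Fin N → ℕ}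
    (z y : ∀ i, EuclideanSpace ℝ (Fin (n i))) (i : Fin N) :
    upTo z y ((i : ℕ) + 1) = Function.update (upTo z y (i : ℕ)) i (z i + y i) := by
  funext j
  rcases eq_or_ne j i with rfl | hji
  · simp [upTo]
  · have hji' : (j : ℕ) ≠ (i : ℕ) := fun h => hji (Fin.ext h)
    simp only [upTo, Function.update_of_ne hji]
    split_ifs with h1 h2 <;> first | rfl | omega

lemma upTo_zero' {N : ℕ} {n : Fin N → ℕ}
    (z y : ∀ i, EuclideanSpace ℝ (Fin (n i))) : upTo z y 0 = z := by
  funext j; simp [upTo]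

lemma upTo_top {N : ℕ} {n : Fin N → ℕ}
    (z y : ∀ i, EuclideanSpace ℝ (Fin (n i))) : upTo z y N = z + y := by
  funext j; simp [upTo, j.isLt]

lemma hP_eq {N : ℕ} {n : Fin N → ℕ}
    {K : ∀ i, Set (EuclideanSpace ℝ (Fin (n i)))}
    {f : Fin N → (∀ i, EuclideanSpace ℝ (Fin (n i))) → ℝ}
    {φ : (∀ i, EuclideanSpace ℝ (Fin (n i))) → ℝ}
    (hφ : IsPotential K f φ)
    (z y : ∀ i, EuclideanSpace ℝ (Fin (n i)))
    (hz : z ∈ jointK K) (hzy : z + y ∈ jointK K) :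
    hP f z y = φ (z + y) - φ z := by
  have hmem : ∀ m : ℕ, upTo z y m ∈ jointK K := by
    intro m j
    dsimp [upTo]
    split_ifs
    · exact hzy j
    · exact hz j
  have hterm : ∀ i : Fin N,
      f i (upTo z y ((i:ℕ)+1)) - f i (upTo z y (i:ℕ))
        = φ (upTo z y ((i:ℕ)+1)) - φ (upTo z y (i:ℕ)) := by
    intro i
    rw [upTo_succ']
    exact hφ i _ (hmem i) _ (hzy i)
  unfold hP
  rw [Finset.sum_congr rfl (fun i _ => hterm i),
    Fin.sum_univ_eq_sum_range (fun m => φ (upTo z y (m+1)) - φ (upTo z y m)) N,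
    Finset.sum_range_sub (fun m => φ (upTo z y m)) N,
    upTo_zero', upTo_top]

lemma upTo_update {N : ℕ} {n : Fin N → ℕ}
    (x : ∀ i, EuclideanSpace ℝ (Fin (n i))) (i : Fin N)
    (v : EuclideanSpace ℝ (Fin (n i))) (m : ℕ) :
    upTo x (Function.update 0 i v) m
      = if (i : ℕ) < m then Function.update x i (x i + v) else x := by
  funext j
  by_cases hm : (i : ℕ) < m
  · rcases eq_or_ne j i with rfl | hji
    · simp [upTo, hm]
    · have hji' : (j : ℕ) ≠ (i : ℕ) := fun h => hji (Fin.ext h)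
      simp [upTo, hm, Function.update_of_ne hji]
  · rcases eq_or_ne j i with rfl | hji
    · simp [upTo, hm]
    · simp [upTo, hm, Function.update_of_ne hji]

lemma hP_single {N : ℕ} {n : Fin N → ℕ}
    (f : Fin N → (∀ i, EuclideanSpace ℝ (Fin (n i))) → ℝ)
    (x : ∀ i, EuclideanSpace ℝ (Fin (n i))) (i : Fin N)
    (v : EuclideanSpace ℝ (Fin (n i))) :
    hP f x (Function.update 0 i v)
      = f i (Function.update x i (x i + v)) - f i x := by
  unfold hP
  rw [Finset.sum_eq_single i]
  · rw [upTo_update, upTo_update, if_pos (Nat.lt_succ_self _), if_neg (lt_irrefl _)]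
  · intro j _ hji
    rw [upTo_update, upTo_update]
    have hji' : (j : ℕ) ≠ (i : ℕ) := fun h => hji (Fin.ext h)
    have h1 : ((i:ℕ) < (j:ℕ) + 1) ↔ ((i:ℕ) < (j:ℕ)) := by omega
    by_cases h : (i:ℕ) < (j:ℕ)
    · rw [if_pos (h1.mpr h), if_pos h, sub_self]
    · rw [if_neg (fun hh => h (h1.mp hh)), if_neg h, sub_self]
  · intro h; exact absurd (Finset.mem_univ i) h

/-- If `0 ∈ K` and each `K i` is symmetric, the game is a potential game
iff `h_P(z,y) = h_P(0,z+y) − h_P(0,z)` on `K`; moreover, in that case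
`φ(z) = C − h_P(z,−z)` is a potential function (for any constant `C`). -/
theorem stmt6 {N : ℕ} {n : Fin N → ℕ}
    (K : ∀ i, Set (EuclideanSpace ℝ (Fin (n i))))
    (f : Fin N → (∀ i, EuclideanSpace ℝ (Fin (n i))) → ℝ)
    (h0 : (0 : ∀ i, EuclideanSpace ℝ (Fin (n i))) ∈ jointK K)
    (hsym : ∀ i, ∀ v ∈ K i, -v ∈ K i) :
    (IsPotentialGame K f ↔
      ∀ z ∈ jointK K, ∀ y : ∀ i, EuclideanSpace ℝ (Fin (n i)),
        z + y ∈ jointK K → hP f z y = hP f 0 (z + y) - hP f 0 z)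
    ∧ (IsPotentialGame K f →
        ∀ C : ℝ, IsPotential K f (fun z => C - hP f z (-z))) := by
  constructor
  · constructor
    · rintro ⟨φ, hφ⟩ z hz y hzy
      have e1 : hP f z y = φ (z + y) - φ z := hP_eq hφ z y hz hzy
      have e2 : hP f 0 (z + y) = φ (z + y) - φ 0 := by
        have := hP_eq hφ 0 (z + y) h0 (by rwa [zero_add])
        rwa [zero_add] at this
      have e3 : hP f 0 z = φ z - φ 0 := by
        have := hP_eq hφ 0 z h0 (by rwa [zero_add])
        rwa [zero_add] at this
      rw [e1, e2, e3]; ring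
    · intro h
      refine ⟨hP f 0, fun i x hx xi' hxi' => ?_⟩
      set y : ∀ j, EuclideanSpace ℝ (Fin (n j)) := Function.update 0 i (xi' - x i) with hy
      have hxy : x + y = Function.update x i xi' := by
        funext j
        rcases eq_or_ne j i with rfl | hji
        · simp [hy]
        · simp [hy, Function.update_of_ne hji]
      have hmem : x + y ∈ jointK K := by
        rw [hxy]
        intro j
        rcases eq_or_ne j i with rfl | hji
        · simpa using hxi'
        · rw [Function.update_of_ne hji]; exact hx j
      have hh := h x hx y hmem
      rw [hP_single f x i (xi' - x i)] at hh
      have hv : x i + (xi' - x i) = xi' := by abel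
      rw [hv] at hh
      rw [hh, hxy]
  · rintro ⟨φ, hφ⟩ C i x hx xi' hxi'
    have hup : Function.update x i xi' ∈ jointK K := by
      intro j
      rcases eq_or_ne j i with rfl | hji
      · simpa using hxi'
      · rw [Function.update_of_ne hji]; exact hx j
    have key : ∀ w ∈ jointK K, hP f w (-w) = φ 0 - φ w := by
      intro w hw
      have := hP_eq hφ w (-w) hw (by rw [add_neg_cancel]; exact h0)
      rwa [add_neg_cancel] at this
    simp only
    rw [key _ hup, key _ hx]
    have := hφ i x hx xi' hxi'
    rw [this]; ring
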